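/- The optimal classical average success probability of the standard d-dimensional random access code with n dits, using identity decoding and majority encoding, equals (1/(n d^n)) Σ [n!/(n_0!···n_{d-1}!)] · max{n_0,...,n_{d-1}}, where the sum is over all non-negative integer solutions of n_0+···+n_{d-1}=n. -/

import Mathlib

open Finset

namespace RACopt

variable {n d : ℕ}

def agree (g a : Fin n → Fin d) : ℕ := ∑ y, if g y = a y then 1 else 0

def score (G : Fin d → Fin n → Fin d) (a : Fin n → Fin d) : ℕ :=
  Finset.univ.sup fun m => agree (G m) a

def total (G : Fin d → Fin n → Fin d) : ℕ := ∑ a, score G a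

lemma agree_update_left (g a : Fin n → Fin d) (y0 : Fin n) (c : Fin d) :
    agree (Function.update g y0 c) a + (if g y0 = a y0 then 1 else 0)
      = agree g a + (if c = a y0 then 1 else 0) := by
  unfold agree
  rw [← Finset.sum_erase_add _ _ (Finset.mem_univ y0),
      ← Finset.sum_erase_add _ (fun y => if g y = a y then 1 else 0) (Finset.mem_univ y0)]
  have h : ∀ y ∈ Finset.univ.erase y0,
      (if Function.update g y0 c y = a y then 1 else 0) = (if g y = a y then 1 else 0) := by
    intro y hy
    rw [Function.update_of_ne (Finset.mem_erase.1 hy).1]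
  rw [Finset.sum_congr rfl h, Function.update_self]
  omega

lemma agree_update_right (g a : Fin n → Fin d) (y0 : Fin n) (x : Fin d) :
    agree g (Function.update a y0 x) + (if g y0 = a y0 then 1 else 0)
      = agree g a + (if g y0 = x then 1 else 0) := by
  unfold agree
  rw [← Finset.sum_erase_add _ _ (Finset.mem_univ y0),
      ← Finset.sum_erase_add _ (fun y => if g y = a y then 1 else 0) (Finset.mem_univ y0)]
  have h : ∀ y ∈ Finset.univ.erase y0,
      (if g y = Function.update a y0 x y then 1 else 0) = (if g y = a y then 1 else 0) := by
    intro y hy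
    rw [Function.update_of_ne (Finset.mem_erase.1 hy).1]
  rw [Finset.sum_congr rfl h, Function.update_self]
  omega

section Exchange

variable (G : Fin d → Fin n → Fin d) (y0 : Fin n) (m m' : Fin d)
  (c : Fin d)

/-- Core pair inequality: `a` has `a y0 = G m y0` (the duplicated value `v`),
`b = update a y0 c` (the fresh value). -/
lemma score_def (G : Fin d → Fin n → Fin d) (a : Fin n → Fin d) :
    score G a = Finset.univ.sup fun k => agree (G k) a := rfl

lemma pair_core (hne : m' ≠ m) (hdup : G m' y0 = G m y0)
    (hc : ∀ k, G k y0 ≠ c) (a : Fin n → Fin d) (ha : a y0 = G m y0) :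
    score G a + score G (Function.update a y0 c)
      ≤ score (Function.update G m (Function.update (G m) y0 c)) a
        + score (Function.update G m (Function.update (G m) y0 c))
            (Function.update a y0 c) := by
  obtain ⟨G', hG'⟩ : ∃ x, x = Function.update G m (Function.update (G m) y0 c) := ⟨_, rfl⟩
  obtain ⟨b, hb⟩ : ∃ x, x = Function.update a y0 c := ⟨_, rfl⟩
  rw [← hG', ← hb]
  have hvc : G m y0 ≠ c := hc m
  have hca : c ≠ a y0 := fun h => hvc (ha ▸ h.symm)
  have hG'm : G' m = Function.update (G m) y0 c := by rw [hG']; exact Function.update_self _ _ _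
  have hG'k : ∀ k, k ≠ m → G' k = G k := by
    intro k hk; rw [hG']; exact Function.update_of_ne hk _ _
  -- (f2) agree (G' m) a + 1 = agree (G m) a
  have f2 : agree (G' m) a + 1 = agree (G m) a := by
    have h2 := agree_update_left (G m) a y0 c
    rw [if_pos ha.symm, if_neg hca] at h2
    rw [hG'm]; omega
  -- (f3) agree (G k) b + [G k y0 = G m y0] = agree (G k) a
  have f3 : ∀ k, agree (G k) b + (if G k y0 = G m y0 then 1 else 0) = agree (G k) a := by
    intro k
    have h3 := agree_update_right (G k) a y0 c
    rw [if_neg (hc k), ha, ← hb] at h3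
    exact h3
  have f3m : agree (G m) b + 1 = agree (G m) a := by
    have := f3 m; rwa [if_pos rfl] at this
  -- (f4) agree (G' m) b = agree (G m) a
  have f4 : agree (G' m) b = agree (G m) a := by
    have h1 := agree_update_right (Function.update (G m) y0 c) a y0 c
    rw [Function.update_self, if_neg hca, if_pos rfl, ← hb] at h1
    have h2 := agree_update_left (G m) a y0 c
    rw [if_pos ha.symm, if_neg hca] at h2
    rw [hG'm]; omega
  -- B ≤ B'
  have hsB : score G b ≤ score G' b := by
    rw [score_def, score_def]
    apply Finset.sup_mono_fun
    intro k _
    by_cases hk : k = m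
    · rw [hk]; omega
    · rw [hG'k k hk]
  by_cases hAA' : score G a ≤ score G' a
  · exact add_le_add hAA' hsB
  · push_neg at hAA'
    -- the max of agree (G ·) a is attained only at m
    obtain ⟨k0, -, hk0⟩ := Finset.exists_mem_eq_sup Finset.univ ⟨m, Finset.mem_univ m⟩
      (fun k => agree (G k) a)
    have hk0m : k0 = m := by
      by_contra hkm
      have h5 : agree (G k0) a ≤ score G' a := by
        rw [score_def, ← hG'k k0 hkm]
        exact Finset.le_sup (f := fun k => agree (G' k) a) (Finset.mem_univ k0)
      have h6 : score G a = agree (G k0) a := by rw [score_def]; exact hk0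
      omega
    rw [hk0m] at hk0
    have hsupA : score G a = agree (G m) a := by rw [score_def]; exact hk0
    have h1 : score G a ≤ score G' b := by
      rw [hsupA, ← f4, score_def]
      exact Finset.le_sup (f := fun k => agree (G' k) b) (Finset.mem_univ m)
    have h2 : score G b ≤ score G' a := by
      rw [score_def]
      apply Finset.sup_le
      intro k _
      have h6 : agree (G' k) a ≤ score G' a := by
        rw [score_def]; exact Finset.le_sup (f := fun j => agree (G' j) a) (Finset.mem_univ k)
      by_cases hk : k = m
      · rw [hk]
        rw [hk] at h6
        omega
      · rw [hG'k k hk] at h6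
        have := f3 k
        omega
    omega

/-- scores are unchanged for strings avoiding both `v` and `c` at `y0`. -/
lemma score_eq_of_ne (hc : ∀ k, G k y0 ≠ c) (a : Fin n → Fin d)
    (hav : a y0 ≠ G m y0) (hac : c ≠ a y0) :
    score (Function.update G m (Function.update (G m) y0 c)) a = score G a := by
  rw [score_def, score_def]
  apply Finset.sup_congr rfl
  intro k _
  by_cases hk : k = m
  · rw [hk, Function.update_self]
    have h2 := agree_update_left (G m) a y0 c
    rw [if_neg (fun h => hav h.symm), if_neg hac] at h2
    omega
  · rw [Function.update_of_ne hk]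

lemma total_le_exchange (hne : m' ≠ m) (hdup : G m' y0 = G m y0)
    (hc : ∀ k, G k y0 ≠ c) :
    total G ≤ total (Function.update G m (Function.update (G m) y0 c)) := by
  obtain ⟨G', hG'⟩ : ∃ x, x = Function.update G m (Function.update (G m) y0 c) := ⟨_, rfl⟩
  rw [← hG']
  have hvc : G m y0 ≠ c := hc m
  -- the swapping involution
  set e : (Fin n → Fin d) → (Fin n → Fin d) :=
    fun a => Function.update a y0 (Equiv.swap (G m y0) c (a y0)) with he
  have hinv : Function.Involutive e := by
    intro a
    simp only [he, Function.update_self, Function.update_idem, Equiv.swap_apply_self,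
      Function.update_eq_self]
  have key : ∀ a, score G a + score G (e a) ≤ score G' a + score G' (e a) := by
    intro a
    by_cases hav : a y0 = G m y0
    · have hea : e a = Function.update a y0 c := by
        simp only [he, hav, Equiv.swap_apply_left]
      rw [hea, hG']
      exact pair_core G y0 m m' c hne hdup hc a hav
    · by_cases hac : a y0 = c
      · have hea : e a = Function.update a y0 (G m y0) := by
          simp only [he, hac, Equiv.swap_apply_right]
        have h1 : (e a) y0 = G m y0 := by rw [hea, Function.update_self]
        have h2 : Function.update (e a) y0 c = a := by
          rw [hea, Function.update_idem, ← hac, Function.update_eq_self]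
        have := pair_core G y0 m m' c hne hdup hc (e a) h1
        rw [h2, ← hG'] at this
        omega
      · have hea : e a = a := by
          simp only [he, Equiv.swap_apply_of_ne_of_ne hav hac, Function.update_eq_self]
        rw [hea]
        have := score_eq_of_ne G y0 m c hc a hav (fun h => hac h.symm)
        rw [← hG'] at this
        omega
  -- sum over the involution
  have hsum : ∀ (H : Fin d → Fin n → Fin d), ∑ a, score H (e a) = ∑ a, score H a := by
    intro H
    exact Equiv.sum_comp hinv.toPerm (score H)
  have h2 : total G + total G ≤ total G' + total G' := by
    unfold total
    calc (∑ a, score G a) + ∑ a, score G a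
        = ∑ a, (score G a + score G (e a)) := by rw [Finset.sum_add_distrib, hsum]
      _ ≤ ∑ a, (score G' a + score G' (e a)) := Finset.sum_le_sum fun a _ => key a
      _ = (∑ a, score G' a) + ∑ a, score G' a := by rw [Finset.sum_add_distrib, hsum]
  omega

end Exchange

/-- the identity codebook: codeword `m` is the constant string `m`. -/
def idCode : Fin d → Fin n → Fin d := fun m _ => m

def colImg (G : Fin d → Fin n → Fin d) (y : Fin n) : Finset (Fin d) :=
  Finset.univ.image fun k => G k y

def meas (G : Fin d → Fin n → Fin d) : ℕ := ∑ y, (d - (colImg G y).card)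

lemma total_eq_of_inj (G : Fin d → Fin n → Fin d)
    (hinj : ∀ y, Function.Injective fun k => G k y) :
    total G = total (idCode (n := n) (d := d)) := by
  have hbij : ∀ y, Function.Bijective fun k => G k y :=
    fun y => Finite.injective_iff_bijective.1 (hinj y)
  set π : Fin n → Fin d ≃ Fin d := fun y => Equiv.ofBijective _ (hbij y) with hπ
  have hπval : ∀ y k, π y k = G k y := fun y k => rfl
  set e : (Fin n → Fin d) ≃ (Fin n → Fin d) := Equiv.piCongrRight π with he
  have heval : ∀ (a : Fin n → Fin d) (y : Fin n), e a y = π y (a y) := fun a y => rfl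
  have hscore : ∀ a, score G (e a) = score (idCode (n := n) (d := d)) a := by
    intro a
    rw [score_def, score_def]
    apply Finset.sup_congr rfl
    intro k _
    unfold agree
    apply Finset.sum_congr rfl
    intro y _
    have : (G k y = e a y) ↔ (idCode k y = a y) := by
      rw [heval, ← hπval, idCode]
      exact ⟨fun h => (π y).injective h, fun h => congrArg (π y) h⟩
    simp only [this]
  calc total G = ∑ a, score G (e a) := (Equiv.sum_comp e (score G)).symm
    _ = total (idCode (n := n) (d := d)) := Finset.sum_congr rfl fun a _ => hscore a

lemma total_le_idCode (hd : 0 < d) (G : Fin d → Fin n → Fin d) :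
    total G ≤ total (idCode (n := n) (d := d)) := by
  suffices H : ∀ N (G : Fin d → Fin n → Fin d), meas G ≤ N →
      total G ≤ total (idCode (n := n) (d := d)) from H (meas G) G le_rfl
  intro N
  induction N with
  | zero =>
    intro G hG
    apply le_of_eq
    apply total_eq_of_inj
    intro y
    have hy : d - (colImg G y).card = 0 := by
      have := Finset.sum_eq_zero_iff.1 (Nat.le_zero.1 hG) y (Finset.mem_univ y)
      exact this
    have hcard : (colImg G y).card ≤ d := by
      simpa using Finset.card_le_card (Finset.subset_univ (colImg G y))
    have himg : colImg G y = Finset.univ := by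
      apply Finset.eq_of_subset_of_card_le (Finset.subset_univ _)
      simp only [Finset.card_univ, Fintype.card_fin]
      omega
    have hsurj : Function.Surjective fun k => G k y := by
      intro t
      have : t ∈ colImg G y := himg ▸ Finset.mem_univ t
      obtain ⟨k, -, hk⟩ := Finset.mem_image.1 this
      exact ⟨k, hk⟩
    exact Function.Surjective.injective_of_finite (Equiv.refl _) hsurj
  | succ N ih =>
    intro G hG
    by_cases h0 : meas G ≤ N
    · exact ih G h0
    · -- find a defective column
      have h1 : 0 < meas G := by omega
      obtain ⟨y0, -, hy0⟩ : ∃ y ∈ Finset.univ, 0 < d - (colImg G y).card := by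
        by_contra hcon
        push_neg at hcon
        have : meas G = 0 := Finset.sum_eq_zero fun y hy => Nat.le_zero.1 (hcon y hy)
        omega
      have hcardlt : (colImg G y0).card < d := by omega
      -- non-injective column
      have hnotinj : ¬ Function.Injective fun k => G k y0 := by
        intro hinj
        have : (colImg G y0).card = d := by
          rw [colImg, Finset.card_image_of_injective _ hinj]
          simp
        omega
      obtain ⟨m', m, hdup, hne⟩ := Function.not_injective_iff.1 hnotinj
      -- fresh value c
      obtain ⟨c, hcmem⟩ : ∃ c, c ∉ colImg G y0 := by
        by_contra hcon
        push_neg at hcon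
        have : (Finset.univ : Finset (Fin d)).card ≤ (colImg G y0).card :=
          Finset.card_le_card fun t _ => hcon t
        simp only [Finset.card_univ, Fintype.card_fin] at this
        omega
      have hc : ∀ k, G k y0 ≠ c := fun k h =>
        hcmem (Finset.mem_image.2 ⟨k, Finset.mem_univ k, h⟩)
      set G' := Function.update G m (Function.update (G m) y0 c) with hG'
      -- measure decreases
      have hmeas : meas G' ≤ N := by
        have hcol_eq : ∀ y, y ≠ y0 → colImg G' y = colImg G y := by
          intro y hy
          apply Finset.image_congr
          intro k _
          show G' k y = G k y
          rw [hG']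
          by_cases hk : k = m
          · rw [hk, Function.update_self, Function.update_of_ne hy]
          · rw [Function.update_of_ne hk]
        have hcol_y0 : insert c (colImg G y0) ⊆ colImg G' y0 := by
          intro t ht
          rcases Finset.mem_insert.1 ht with h | h
          · subst h
            apply Finset.mem_image.2 ⟨m, Finset.mem_univ m, ?_⟩
            show G' m y0 = t
            rw [hG', Function.update_self, Function.update_self]
          · obtain ⟨k, -, hk⟩ := Finset.mem_image.1 h
            by_cases hkm : k = m
            · apply Finset.mem_image.2 ⟨m', Finset.mem_univ m', ?_⟩
              show G' m' y0 = t
              rw [hG', Function.update_of_ne hne, hdup, ← hkm]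
              exact hk
            · apply Finset.mem_image.2 ⟨k, Finset.mem_univ k, ?_⟩
              show G' k y0 = t
              rw [hG', Function.update_of_ne hkm]
              exact hk
        have hcard' : (colImg G y0).card + 1 ≤ (colImg G' y0).card := by
          have := Finset.card_le_card hcol_y0
          rwa [Finset.card_insert_of_notMem hcmem] at this
        have hlt : meas G' < meas G := by
          unfold meas
          apply Finset.sum_lt_sum
          · intro y _
            by_cases hy : y = y0
            · subst hy; omega
            · rw [hcol_eq y hy]
          · exact ⟨y0, Finset.mem_univ y0, by omega⟩
        omega
      calc total G ≤ total G' := by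
            rw [hG']; exact total_le_exchange G y0 m m' c hne hdup hc
        _ ≤ total (idCode (n := n) (d := d)) := ih G' hmeas

lemma multinomial_zero_fn {ι : Type*} (s : Finset ι) :
    Nat.multinomial s (fun _ => 0) = 1 := by
  have := Nat.multinomial_spec s (fun _ => 0)
  simpa using this

/-- Pascal-type recurrence for multinomial coefficients. -/
lemma multinomial_pascal (f : Fin d → ℕ) (hf : 0 < ∑ c, f c) :
    ∑ x, (if f x = 0 then 0
      else Nat.multinomial Finset.univ (Function.update f x (f x - 1)))
    = Nat.multinomial Finset.univ f := by
  have hprodpos : 0 < ∏ i, (f i).factorial :=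
    Finset.prod_pos fun i _ => Nat.factorial_pos _
  apply Nat.eq_of_mul_eq_mul_left hprodpos
  rw [Finset.mul_sum]
  have key : ∀ x, (∏ i, (f i).factorial) *
      (if f x = 0 then 0
        else Nat.multinomial Finset.univ (Function.update f x (f x - 1)))
      = f x * ((∑ c, f c) - 1).factorial := by
    intro x
    by_cases hx : f x = 0
    · simp [hx]
    · rw [if_neg hx]
      have hsum' : ∑ i, Function.update f x (f x - 1) i = (∑ c, f c) - 1 := by
        rw [Finset.sum_update_of_mem (Finset.mem_univ x)]
        have h2 := Finset.sum_eq_sum_sdiff_singleton_add (Finset.mem_univ x) f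
        omega
      have hprod' : ∏ i, (f i).factorial
          = f x * ∏ i, ((Function.update f x (f x - 1)) i).factorial := by
        rw [← Finset.mul_prod_erase Finset.univ (fun i => (f i).factorial) (Finset.mem_univ x),
            ← Finset.mul_prod_erase Finset.univ
              (fun i => ((Function.update f x (f x - 1)) i).factorial) (Finset.mem_univ x)]
        have h3 : ∀ i ∈ Finset.univ.erase x,
            ((Function.update f x (f x - 1)) i).factorial = (f i).factorial := by
          intro i hi
          rw [Function.update_of_ne (Finset.mem_erase.1 hi).1]
        have hfact : (f x).factorial = f x * (f x - 1).factorial := by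
          conv_lhs => rw [show f x = (f x - 1) + 1 by omega]
          rw [Nat.factorial_succ]
          congr 1
          omega
        rw [Finset.prod_congr rfl h3, Function.update_self, hfact]
        ring
      rw [hprod', mul_assoc, Nat.multinomial_spec, hsum']
  rw [Finset.sum_congr rfl fun x _ => key x, ← Finset.sum_mul]
  rw [Nat.multinomial_spec]
  have h5 : ∑ c, f c = ((∑ c, f c) - 1) + 1 := by omega
  rw [h5, Nat.factorial_succ]
  simp

/-- Number of strings with prescribed letter frequencies is the multinomial coefficient. -/
lemma card_freq_eq : ∀ (n : ℕ) (f : Fin d → ℕ), (∑ c, f c) = n →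
    ((Finset.univ : Finset (Fin n → Fin d)).filter
      (fun a => ∀ c, (∑ y, if c = a y then 1 else 0) = f c)).card
    = Nat.multinomial Finset.univ f := by
  intro n
  induction n with
  | zero =>
    intro f hf
    have hf0 : ∀ c, f c = 0 := by
      intro c
      exact Finset.sum_eq_zero_iff.1 hf c (Finset.mem_univ c)
    have : ((Finset.univ : Finset (Fin 0 → Fin d)).filter
        (fun a => ∀ c, (∑ y, if c = a y then 1 else 0) = f c)) = Finset.univ := by
      apply Finset.filter_true_of_mem
      intro a _ c
      simp [hf0 c]
    rw [this, Nat.multinomial_congr (fun c _ => hf0 c), multinomial_zero_fn]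
    simp [Finset.card_univ]
  | succ n ih =>
    intro f hf
    rw [Finset.card_filter]
    rw [← Equiv.sum_comp (Fin.consEquiv (fun _ : Fin (n+1) => Fin d))
      (fun a => if (∀ c, (∑ y, if c = a y then 1 else 0) = f c) then 1 else 0)]
    rw [Fintype.sum_prod_type]
    have hcond : ∀ (x : Fin d) (a' : Fin n → Fin d),
        (∀ c, (∑ y, if c = Fin.consEquiv (fun _ : Fin (n+1) => Fin d) (x, a') y then 1 else 0) = f c)
        ↔ (¬ f x = 0 ∧ ∀ c, (∑ y, if c = a' y then 1 else 0)
            = Function.update f x (f x - 1) c) := by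
      intro x a'
      have hsum : ∀ c, (∑ y : Fin (n+1), if c = Fin.cons x a' y then 1 else 0)
          = (if c = x then 1 else 0) + ∑ y : Fin n, (if c = a' y then 1 else 0) := by
        intro c
        rw [Fin.sum_univ_succ]
        simp [Fin.cons_zero, Fin.cons_succ]
      constructor
      · intro h
        have hx := h x
        rw [show Fin.consEquiv (fun _ : Fin (n+1) => Fin d) (x, a') = Fin.cons x a' from rfl,
          hsum, if_pos rfl] at hx
        constructor
        · omega
        · intro c
          have hc := h c
          rw [show Fin.consEquiv (fun _ : Fin (n+1) => Fin d) (x, a') = Fin.cons x a' from rfl,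
            hsum] at hc
          by_cases hcx : c = x
          · subst hcx
            rw [Function.update_self]
            rw [if_pos rfl] at hc
            omega
          · rw [Function.update_of_ne hcx]
            rw [if_neg hcx] at hc
            omega
      · rintro ⟨hx0, h⟩ c
        rw [show Fin.consEquiv (fun _ : Fin (n+1) => Fin d) (x, a') = Fin.cons x a' from rfl,
          hsum]
        by_cases hcx : c = x
        · subst hcx
          have := h c
          rw [Function.update_self] at this
          rw [if_pos rfl]
          omega
        · have := h c
          rw [Function.update_of_ne hcx] at this
          rw [if_neg hcx]
          omega
    have hinner : ∀ x : Fin d,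
        (∑ a' : Fin n → Fin d,
          if (∀ c, (∑ y, if c = Fin.consEquiv (fun _ : Fin (n+1) => Fin d) (x, a') y then 1 else 0) = f c) then 1 else 0)
        = if f x = 0 then 0
          else Nat.multinomial Finset.univ (Function.update f x (f x - 1)) := by
      intro x
      by_cases hx : f x = 0
      · rw [if_pos hx]
        apply Finset.sum_eq_zero
        intro a' _
        rw [if_neg]
        rw [hcond x a']
        rintro ⟨h1, -⟩
        exact h1 hx
      · rw [if_neg hx]
        have hupd : ∑ c, Function.update f x (f x - 1) c = n := by
          rw [Finset.sum_update_of_mem (Finset.mem_univ x)]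
          have h2 := Finset.sum_eq_sum_sdiff_singleton_add (Finset.mem_univ x) f
          omega
        rw [← ih (Function.update f x (f x - 1)) hupd, Finset.card_filter]
        apply Finset.sum_congr rfl
        intro a' _
        congr 1
        rw [eq_iff_iff, hcond x a']
        constructor
        · rintro ⟨-, h⟩; exact h
        · intro h; exact ⟨hx, h⟩
    rw [Finset.sum_congr rfl fun x _ => hinner x]
    exact multinomial_pascal f (by omega)

/-- The number of strings in the fiber over a frequency vector, times max. -/
lemma total_idCode_eq (n d : ℕ) :
    total (idCode (n := n) (d := d))
      = ∑ f ∈ (Finset.univ : Finset (Fin d → Fin (n + 1))).filter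
            (fun f => ∑ i, (f i : ℕ) = n),
          Nat.multinomial Finset.univ (fun i => (f i : ℕ))
            * (Finset.univ.sup fun i => (f i : ℕ)) := by
  have hfreq_le : ∀ (a : Fin n → Fin d) (c : Fin d),
      (∑ y, if c = a y then 1 else 0) < n + 1 := by
    intro a c
    have : (∑ y : Fin n, if c = a y then 1 else 0) ≤ ∑ y : Fin n, 1 :=
      Finset.sum_le_sum fun y _ => by split <;> omega
    simpa using Nat.lt_succ_of_le (le_trans this (by simp))
  set φ : (Fin n → Fin d) → (Fin d → Fin (n + 1)) :=
    fun a c => ⟨∑ y, if c = a y then 1 else 0, hfreq_le a c⟩ with hφ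
  have hmaps : ∀ a ∈ (Finset.univ : Finset (Fin n → Fin d)),
      φ a ∈ (Finset.univ : Finset (Fin d → Fin (n + 1))).filter
        (fun f => ∑ i, (f i : ℕ) = n) := by
    intro a _
    rw [Finset.mem_filter]
    refine ⟨Finset.mem_univ _, ?_⟩
    have : ∑ c : Fin d, ((φ a c : ℕ)) = ∑ c : Fin d, ∑ y, if c = a y then 1 else 0 := rfl
    rw [this, Finset.sum_comm]
    have h1 : ∀ y : Fin n, (∑ c : Fin d, if c = a y then 1 else 0) = 1 := by
      intro y
      rw [Finset.sum_ite_eq' Finset.univ (a y) (fun _ => 1)]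
      simp
    rw [Finset.sum_congr rfl fun y _ => h1 y]
    simp
  rw [total, ← Finset.sum_fiberwise_of_maps_to hmaps (score (idCode (n := n) (d := d)))]
  apply Finset.sum_congr rfl
  intro f hf
  have hfsum : ∑ i, (f i : ℕ) = n := (Finset.mem_filter.1 hf).2
  have hfiber_eq : (Finset.univ : Finset (Fin n → Fin d)).filter (fun a => φ a = f)
      = (Finset.univ : Finset (Fin n → Fin d)).filter
          (fun a => ∀ c, (∑ y, if c = a y then 1 else 0) = (f c : ℕ)) := by
    apply Finset.filter_congr
    intro a _
    constructor
    · intro h c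
      have := congrFun h c
      exact congrArg Fin.val this
    · intro h
      funext c
      exact Fin.ext (h c)
  have hscore : ∀ a ∈ (Finset.univ : Finset (Fin n → Fin d)).filter (fun a => φ a = f),
      score (idCode (n := n) (d := d)) a = Finset.univ.sup fun i => (f i : ℕ) := by
    intro a ha
    have h2 : ∀ c, (∑ y, if c = a y then 1 else 0) = (f c : ℕ) := by
      intro c
      exact congrArg Fin.val (congrFun (Finset.mem_filter.1 ha).2 c)
    rw [score_def]
    apply Finset.sup_congr rfl
    intro k _
    rw [← h2 k]
    rfl
  rw [Finset.sum_congr rfl hscore, Finset.sum_const, hfiber_eq,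
    card_freq_eq n (fun i => (f i : ℕ)) hfsum, smul_eq_mul]

/-- Any deterministic strategy scores at most `total idCode`. -/
lemma strategy_le (hd : 0 < d) (E : (Fin n → Fin d) → Fin d) (D : Fin n → Fin d → Fin d) :
    (∑ a : Fin n → Fin d, ∑ y : Fin n, if D y (E a) = a y then 1 else 0)
      ≤ total (idCode (n := n) (d := d)) := by
  have h1 : (∑ a : Fin n → Fin d, ∑ y : Fin n, if D y (E a) = a y then 1 else 0)
      ≤ total (fun m y => D y m) := by
    apply Finset.sum_le_sum
    intro a _
    have : (∑ y : Fin n, if D y (E a) = a y then 1 else 0)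
        = agree (n := n) (d := d) (fun y => D y (E a)) a := rfl
    rw [this]
    exact Finset.le_sup (f := fun m => agree (n := n) (d := d) (fun y => D y m) a)
      (Finset.mem_univ (E a))
  exact le_trans h1 (total_le_idCode hd _)

/-- Majority encoding together with identity decoding achieves `total idCode`. -/
lemma strategy_exists (hd : 0 < d) :
    ∃ (E : (Fin n → Fin d) → Fin d) (D : Fin n → Fin d → Fin d),
      (∑ a : Fin n → Fin d, ∑ y : Fin n, if D y (E a) = a y then 1 else 0)
        = total (idCode (n := n) (d := d)) := by
  have hne : (Finset.univ : Finset (Fin d)).Nonempty := ⟨⟨0, hd⟩, Finset.mem_univ _⟩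
  have h : ∀ a : Fin n → Fin d, ∃ m : Fin d,
      score (idCode (n := n) (d := d)) a = agree (idCode (n := n) (d := d) m) a := by
    intro a
    obtain ⟨b, -, hb⟩ := Finset.exists_mem_eq_sup Finset.univ hne
      (fun m => agree (idCode (n := n) (d := d) m) a)
    exact ⟨b, hb⟩
  choose E hE using h
  refine ⟨E, fun _ m => m, ?_⟩
  apply Finset.sum_congr rfl
  intro a _
  have h0 : (∑ y : Fin n, if E a = a y then 1 else 0)
      = agree (idCode (n := n) (d := d) (E a)) a := rfl
  rw [h0, ← hE a]

end RACopt

/-- Average success probability of a deterministic strategy `(E, D)` in the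
`d`-dimensional RAC with `n` dits. -/
noncomputable def racAvg (n d : ℕ) (E : (Fin n → Fin d) → Fin d)
    (D : Fin n → Fin d → Fin d) : ℝ :=
  (∑ a : Fin n → Fin d, ∑ y : Fin n, if D y (E a) = a y then (1 : ℝ) else 0)
    / (n * d ^ n)

/-- The optimal classical average success probability of the standard
`d`-dimensional RAC with `n` dits equals
`(1/(n dⁿ)) Σ [n!/(n₀!⋯n_{d-1}!)]·max{n₀,…,n_{d-1}}`,
summed over non-negative integer solutions of `n₀+⋯+n_{d-1} = n`. -/
theorem stmt_3 (n d : ℕ) (hn : 0 < n) (hd : 0 < d) :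
    IsGreatest {p : ℝ | ∃ (E : (Fin n → Fin d) → Fin d) (D : Fin n → Fin d → Fin d),
        p = racAvg n d E D}
      ((∑ f ∈ (Finset.univ : Finset (Fin d → Fin (n + 1))).filter
            (fun f => ∑ i, (f i : ℕ) = n),
          ((Nat.multinomial Finset.univ (fun i => (f i : ℕ)) *
            (Finset.univ.sup fun i => (f i : ℕ)) : ℕ) : ℝ)) / (n * d ^ n)) := by
  have hM := RACopt.total_idCode_eq n d
  have hcast : (∑ f ∈ (Finset.univ : Finset (Fin d → Fin (n + 1))).filter
            (fun f => ∑ i, (f i : ℕ) = n),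
          ((Nat.multinomial Finset.univ (fun i => (f i : ℕ)) *
            (Finset.univ.sup fun i => (f i : ℕ)) : ℕ) : ℝ))
      = ((RACopt.total (RACopt.idCode (n := n) (d := d)) : ℕ) : ℝ) := by
    rw [hM]
    exact (Nat.cast_sum _ _).symm
  have hnum : ∀ (E : (Fin n → Fin d) → Fin d) (D : Fin n → Fin d → Fin d),
      (∑ a : Fin n → Fin d, ∑ y : Fin n, if D y (E a) = a y then (1 : ℝ) else 0)
      = ((∑ a : Fin n → Fin d, ∑ y : Fin n, if D y (E a) = a y then 1 else 0 : ℕ) : ℝ) := by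
    intro E D
    push_cast
    rfl
  constructor
  · obtain ⟨E, D, hE⟩ := RACopt.strategy_exists (n := n) hd
    refine ⟨E, D, ?_⟩
    rw [racAvg, hnum E D, hE, hcast]
  · rintro p ⟨E, D, rfl⟩
    rw [racAvg, hnum E D, hcast]
    have hden : (0 : ℝ) < (n : ℝ) * (d : ℝ) ^ n := by
      apply mul_pos
      · exact_mod_cast hn
      · exact pow_pos (by exact_mod_cast hd) n
    apply div_le_div_of_nonneg_right ?_ hden.le
    exact_mod_cast RACopt.strategy_le hd E D
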